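/- Let K be a field, m ≥ 1, s ∈ ℤ^m, and let P, Q ∈ K[X]^{m×m} be nonsingular matrices in s-weak Popov form that are left-unimodularly equivalent (Q = U·P for some U ∈ K[X]^{m×m} with det U a nonzero constant). Then P and Q have the same s-pivot degree. -/

import Mathlib

open Polynomial Matrix

/-- Degree of a polynomial as an element of `WithBot ℤ`, with `degZ 0 = ⊥`. -/
noncomputable def degZ {K : Type*} [Field K] (p : Polynomial K) : WithBot ℤ :=
  p.degree.map (fun n : ℕ => (n : ℤ))

/-- The `s`-degree of a row vector `p`: `max_j (deg p_j + s_j)`. -/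
noncomputable def sdeg {K : Type*} [Field K] {ι : Type*} [Fintype ι]
    (s : ι → ℤ) (p : ι → Polynomial K) : WithBot ℤ :=
  Finset.univ.sup fun j => degZ (p j) + (s j : WithBot ℤ)

/-- `j` is the `s`-pivot index of the row `p`: the largest index at which the
`s`-degree of `p` is attained. -/
def IsPivotIndex {K : Type*} [Field K] {ι : Type*} [Fintype ι] [LinearOrder ι]
    (s : ι → ℤ) (p : ι → Polynomial K) (j : ι) : Prop :=
  degZ (p j) + (s j : WithBot ℤ) = sdeg s p ∧
    ∀ k, j < k → degZ (p k) + (s k : WithBot ℤ) ≠ sdeg s p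

/-- `P` is in `s`-Popov form: it is nonsingular, the `s`-pivot entries are monic and
on the diagonal, and in each column the nonpivot entries have degree less than
the pivot entry. -/
def IsPopov {K : Type*} [Field K] {m : ℕ} (s : Fin m → ℤ)
    (P : Matrix (Fin m) (Fin m) (Polynomial K)) : Prop :=
  P.det ≠ 0 ∧ (∀ i, IsPivotIndex s (P i) i) ∧ (∀ i, (P i i).Monic) ∧
    ∀ i j, i ≠ j → (P i j).degree < (P j j).degree

/-- `p` is an interpolant for `(E, J)`: `∑ i, (row i of E) ⋅ (p i)(J) = 0`. -/
def IsInterpolant {K : Type*} [Field K] {ι n : Type*} [Fintype ι] [Fintype n] [DecidableEq n]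
    (E : Matrix ι n K) (J : Matrix n n K) (p : ι → Polynomial K) : Prop :=
  ∑ i, Matrix.vecMul (E i) (Polynomial.aeval J (p i)) = 0

/-- `P` is an interpolation basis for `(E, J)`: its rows form a basis of the
`K[X]`-module of interpolants for `(E, J)`. -/
def IsInterpolationBasis {K : Type*} [Field K] {ι n : Type*} [Fintype ι] [Fintype n]
    [DecidableEq n] (E : Matrix ι n K) (J : Matrix n n K)
    (P : Matrix ι ι (Polynomial K)) : Prop :=
  LinearIndependent (Polynomial K) (fun i => P i) ∧
    (Submodule.span (Polynomial K) (Set.range fun i => P i) : Set (ι → Polynomial K))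
      = {p | IsInterpolant E J p}

/-- The product `Q ⋅ E`: the matrix over `K` whose `i`-th row is `∑ j, (E j) ⋅ (Q i j)(J)`. -/
noncomputable def polMulMat {K : Type*} [Field K] {κ ι n : Type*} [Fintype κ] [Fintype ι]
    [Fintype n] [DecidableEq n]
    (Q : Matrix κ ι (Polynomial K)) (E : Matrix ι n K) (J : Matrix n n K) : Matrix κ n K :=
  fun i => ∑ j, Matrix.vecMul (E j) (Polynomial.aeval J (Q i j))

/-- The `s`-leading matrix of `R`: if row `i` has `s`-degree `d`, its `(i,j)` entry is
the coefficient of degree `d - s j` in `R i j` (and `0` if row `i` is zero). -/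
noncomputable def leadingMatrix {K : Type*} [Field K] {ι : Type*} [Fintype ι]
    (s : ι → ℤ) (R : Matrix ι ι (Polynomial K)) : Matrix ι ι K := fun i j =>
  WithBot.recBotCoe 0
    (fun d => if 0 ≤ d - s j then (R i j).coeff (d - s j).toNat else 0)
    (sdeg s (R i))

section helpers
variable {K : Type*} [Field K]

lemma degZ_zero : degZ (0 : Polynomial K) = ⊥ := by simp [degZ]

lemma degZ_eq_bot {p : Polynomial K} : degZ p = ⊥ ↔ p = 0 := by
  unfold degZ
  rw [← Polynomial.degree_eq_bot]
  cases p.degree with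
  | bot => simp
  | coe a => simp [WithBot.map_coe]

lemma degZ_mul (p q : Polynomial K) : degZ (p * q) = degZ p + degZ q := by
  unfold degZ
  rw [Polynomial.degree_mul]
  cases p.degree with
  | bot => simp
  | coe a => cases q.degree with
    | bot => simp
    | coe b => simp [WithBot.map_coe, ← WithBot.coe_add]

lemma degZ_le_iff {p q : Polynomial K} : degZ p ≤ degZ q ↔ p.degree ≤ q.degree := by
  unfold degZ
  cases hp : p.degree with
  | bot => simp
  | coe a => cases hq : q.degree with
    | bot => simp [WithBot.map_coe]
    | coe b => simp [WithBot.map_coe, WithBot.coe_le_coe, Nat.cast_le]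

lemma degZ_lt_iff {p q : Polynomial K} : degZ p < degZ q ↔ p.degree < q.degree := by
  rw [← not_le, ← not_le, degZ_le_iff]

lemma degZ_add_le (p q : Polynomial K) : degZ (p + q) ≤ max (degZ p) (degZ q) := by
  rcases le_total p.degree q.degree with h | h
  · exact le_max_of_le_right (degZ_le_iff.mpr ((Polynomial.degree_add_le p q).trans_eq (max_eq_right h)))
  · exact le_max_of_le_left (degZ_le_iff.mpr ((Polynomial.degree_add_le p q).trans_eq (max_eq_left h)))

lemma degZ_sum_le {ι : Type*} (t : Finset ι) (f : ι → Polynomial K) (D : WithBot ℤ)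
    (h : ∀ k ∈ t, degZ (f k) ≤ D) : degZ (∑ k ∈ t, f k) ≤ D := by
  classical
  induction t using Finset.induction_on with
  | empty => simp [degZ_zero]
  | insert a s hx ih =>
    rw [Finset.sum_insert hx]
    refine (degZ_add_le _ _).trans (max_le (h a (Finset.mem_insert_self a s)) ?_)
    exact ih fun k hk => h k (Finset.mem_insert_of_mem hk)

lemma degZ_sum_lt {ι : Type*} (t : Finset ι) (f : ι → Polynomial K) (D : WithBot ℤ)
    (hD : ⊥ < D) (h : ∀ k ∈ t, degZ (f k) < D) : degZ (∑ k ∈ t, f k) < D := by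
  classical
  induction t using Finset.induction_on with
  | empty => simpa [degZ_zero] using hD
  | insert a s hx ih =>
    rw [Finset.sum_insert hx]
    refine (degZ_add_le _ _).trans_lt (max_lt (h a (Finset.mem_insert_self a s)) ?_)
    exact ih fun k hk => h k (Finset.mem_insert_of_mem hk)

lemma wb_le (a : WithBot ℤ) (x y : ℤ) :
    a + (x : WithBot ℤ) ≤ (y : WithBot ℤ) ↔ a ≤ ((y - x : ℤ) : WithBot ℤ) := by
  cases a with
  | bot => simp
  | coe av =>
    rw [← WithBot.coe_add, WithBot.coe_le_coe, WithBot.coe_le_coe]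
    omega

lemma wb_lt (a : WithBot ℤ) (x y : ℤ) :
    a + (x : WithBot ℤ) < (y : WithBot ℤ) ↔ a < ((y - x : ℤ) : WithBot ℤ) := by
  cases a with
  | bot => simp [WithBot.bot_lt_coe]
  | coe av =>
    rw [← WithBot.coe_add, WithBot.coe_lt_coe, WithBot.coe_lt_coe]
    omega

lemma wb_eq (a : WithBot ℤ) (x y : ℤ) :
    a + (x : WithBot ℤ) = (y : WithBot ℤ) ↔ a = ((y - x : ℤ) : WithBot ℤ) := by
  cases a with
  | bot => simp
  | coe av =>
    rw [← WithBot.coe_add, WithBot.coe_inj, WithBot.coe_inj]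
    omega

lemma wb_le_add (a b : WithBot ℤ) (h : (0 : WithBot ℤ) ≤ a) : b ≤ a + b := by
  cases a with
  | bot => simp at h
  | coe av =>
    cases b with
    | bot => simp
    | coe bv =>
      rw [← WithBot.coe_add, WithBot.coe_le_coe]
      rw [← WithBot.coe_zero, WithBot.coe_le_coe] at h
      omega
end helpers

lemma key_lemma {K : Type*} [Field K] {m : ℕ} (s : Fin m → ℤ)
    (P : Matrix (Fin m) (Fin m) (Polynomial K)) (pivP : Fin m → Fin m)
    (hpivP : ∀ i, IsPivotIndex s (P i) (pivP i)) (hPinj : Function.Injective pivP)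
    (u q : Fin m → Polynomial K) (hq : ∀ c, q c = ∑ k, u k * P k c)
    (j : Fin m) (hj : IsPivotIndex s q j) (hq0 : sdeg s q ≠ ⊥) :
    ∃ k, pivP k = j ∧ degZ (P k j) ≤ degZ (q j) := by
  classical
  have hne : Nonempty (Fin m) := ⟨j⟩
  set t : Fin m → WithBot ℤ := fun k => degZ (u k) + sdeg s (P k) with ht
  set M : WithBot ℤ := Finset.univ.sup t with hM
  have hterm : ∀ k c, degZ (u k * P k c) + (s c : WithBot ℤ) ≤ t k := by
    intro k c
    rw [degZ_mul, add_assoc]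
    exact add_le_add le_rfl
      (Finset.le_sup (f := fun c => degZ (P k c) + (s c : WithBot ℤ)) (Finset.mem_univ c))
  have htM : ∀ k, t k ≤ M := fun k => Finset.le_sup (Finset.mem_univ k)
  -- M ≠ ⊥
  have hMne : M ≠ ⊥ := by
    intro hMbot
    apply hq0
    have hzero : ∀ c, q c = 0 := by
      intro c
      rw [hq]
      apply Finset.sum_eq_zero
      intro k _
      have h1 : degZ (u k * P k c) + (s c : WithBot ℤ) ≤ ⊥ := (hterm k c).trans (hMbot ▸ htM k)
      have h2 : degZ (u k * P k c) + (s c : WithBot ℤ) = ⊥ := le_bot_iff.mp h1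
      rcases WithBot.add_eq_bot.mp h2 with h3 | h3
      · exact degZ_eq_bot.mp h3
      · exact absurd h3 (WithBot.coe_ne_bot)
    have : sdeg s q = ⊥ := by
      rw [sdeg]
      apply le_bot_iff.mp
      apply Finset.sup_le
      intro c _
      simp [hzero c, degZ_zero]
    exact this
  obtain ⟨Mv, hMv⟩ := WithBot.ne_bot_iff_exists.mp hMne
  -- sdeg s q ≤ M
  have hcol : ∀ c, degZ (q c) + (s c : WithBot ℤ) ≤ M := by
    intro c
    rw [← hMv, wb_le, hq]
    refine degZ_sum_le _ _ _ fun k _ => ?_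
    rw [← wb_le (y := Mv)]
    exact (hterm k c).trans (hMv ▸ htM k)
  have hsdeg_le : sdeg s q ≤ M := Finset.sup_le fun c _ => hcol c
  -- choose k0 maximizing pivP among attainers of M
  set F : Finset (Fin m) := Finset.univ.filter (fun k => t k = M) with hF
  have hFne : F.Nonempty := by
    obtain ⟨k, _, hk⟩ := Finset.exists_mem_eq_sup Finset.univ Finset.univ_nonempty t
    exact ⟨k, Finset.mem_filter.mpr ⟨Finset.mem_univ k, hk.symm⟩⟩
  obtain ⟨k0, hk0F, hk0max⟩ := Finset.exists_max_image F pivP hFne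
  have hk0 : t k0 = M := (Finset.mem_filter.mp hk0F).2
  set j0 : Fin m := pivP k0 with hj0
  have hpiv0 : degZ (P k0 j0) + (s j0 : WithBot ℤ) = sdeg s (P k0) := (hpivP k0).1
  -- nonbot facts
  have hu0 : degZ (u k0) ≠ ⊥ := by
    intro h; apply hMne; rw [← hk0, ht]; simp [h]
  have hsP0 : sdeg s (P k0) ≠ ⊥ := by
    intro h; apply hMne; rw [← hk0, ht]; simp [h]
  have hP0 : degZ (P k0 j0) ≠ ⊥ := by
    intro h; apply hsP0; rw [← hpiv0, h]; simp
  set D0 : WithBot ℤ := degZ (u k0) + degZ (P k0 j0) with hD0def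
  have hD0M : D0 + (s j0 : WithBot ℤ) = M := by
    rw [hD0def, add_assoc, hpiv0]; exact hk0
  have hD0 : D0 = ((Mv - s j0 : ℤ) : WithBot ℤ) := by
    rw [← wb_eq, hD0M, hMv]
  have hD0ne : (⊥ : WithBot ℤ) < D0 := by rw [hD0]; exact WithBot.bot_lt_coe _
  -- Claim A: other terms in column j0 are strictly smaller
  have hA : ∀ k, k ≠ k0 → degZ (u k * P k j0) < D0 := by
    intro k hk
    by_cases hu : u k = 0
    · rw [hu, zero_mul, degZ_zero]; exact hD0ne
    · have huk : degZ (u k) ≠ ⊥ := fun h => hu (degZ_eq_bot.mp h)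
      have h1 : degZ (P k j0) + (s j0 : WithBot ℤ) ≤ sdeg s (P k) :=
        Finset.le_sup (f := fun c => degZ (P k c) + (s c : WithBot ℤ)) (Finset.mem_univ j0)
      by_cases hkF : t k = M
      · -- k ∈ F, pivP k < j0
        have hkFmem : k ∈ F := Finset.mem_filter.mpr ⟨Finset.mem_univ k, hkF⟩
        have hle : pivP k ≤ j0 := hk0max k hkFmem
        have hne' : pivP k ≠ j0 := fun h => hk (hPinj h)
        have hlt : pivP k < j0 := lt_of_le_of_ne hle hne'
        have h2 : degZ (P k j0) + (s j0 : WithBot ℤ) ≠ sdeg s (P k) := (hpivP k).2 j0 hlt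
        have h3 : degZ (P k j0) + (s j0 : WithBot ℤ) < sdeg s (P k) := lt_of_le_of_ne h1 h2
        have h4 : degZ (u k) + (degZ (P k j0) + (s j0 : WithBot ℤ)) < degZ (u k) + sdeg s (P k) := by
          obtain ⟨uv, huv⟩ := WithBot.ne_bot_iff_exists.mp huk
          rw [← huv]
          exact WithBot.add_lt_add_left (WithBot.coe_ne_bot) h3
      -- conclude
        rw [← add_assoc] at h4
        have h5 : degZ (u k) + degZ (P k j0) + (s j0 : WithBot ℤ) < M := by
          rw [← hkF]; exact h4
        rw [degZ_mul, hD0]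
        rw [← hMv] at h5
        exact (wb_lt _ _ _).mp h5
      · have hklt : t k < M := lt_of_le_of_ne (htM k) hkF
        have h5 : degZ (u k * P k j0) + (s j0 : WithBot ℤ) < M := lt_of_le_of_lt (hterm k j0) hklt
        rw [← hMv] at h5
        rw [hD0]
        exact (wb_lt _ _ _).mp h5
  -- Claim B: degZ (q j0) = D0
  have hB : degZ (q j0) = D0 := by
    have hsplit : q j0 = u k0 * P k0 j0 + ∑ k ∈ Finset.univ.erase k0, u k * P k j0 := by
      rw [hq]
      rw [← Finset.add_sum_erase Finset.univ (fun k => u k * P k j0) (Finset.mem_univ k0)]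
    have hrest : degZ (∑ k ∈ Finset.univ.erase k0, u k * P k j0) < D0 := by
      refine degZ_sum_lt _ _ _ hD0ne fun k hk => hA k (Finset.ne_of_mem_erase hk)
    have hlead : degZ (u k0 * P k0 j0) = D0 := by rw [degZ_mul]
    rw [hsplit]
    have hdeg : (∑ k ∈ Finset.univ.erase k0, u k * P k j0).degree < (u k0 * P k0 j0).degree := by
      rw [← degZ_lt_iff]; rw [hlead]; exact hrest
    rw [show degZ (u k0 * P k0 j0 + ∑ k ∈ Finset.univ.erase k0, u k * P k j0)
        = degZ (u k0 * P k0 j0) from by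
      unfold degZ; rw [Polynomial.degree_add_eq_left_of_degree_lt hdeg]]
    exact hlead
  -- sdeg s q = M
  have hsdeg : sdeg s q = M := by
    refine le_antisymm hsdeg_le ?_
    rw [← hD0M, ← hB]
    exact Finset.le_sup (f := fun c => degZ (q c) + (s c : WithBot ℤ)) (Finset.mem_univ j0)
  -- Claim C: j = j0
  have hC : j = j0 := by
    rcases lt_trichotomy j j0 with hlt | heq | hgt
    · exfalso
      exact hj.2 j0 hlt (by rw [hB, hD0M, hsdeg])
    · exact heq
    · exfalso
      have hjM : degZ (q j) + (s j : WithBot ℤ) = M := by rw [hj.1, hsdeg]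
      have hstrict : degZ (q j) + (s j : WithBot ℤ) < M := by
        rw [← hMv, wb_lt, hq]
        refine degZ_sum_lt _ _ _ (WithBot.bot_lt_coe _) fun k _ => ?_
        rw [← wb_lt (y := Mv), hMv]
        by_cases hu : u k = 0
        · rw [hu, zero_mul, degZ_zero]
          have : (⊥ : WithBot ℤ) + (s j : WithBot ℤ) = ⊥ := by simp
          rw [this, ← hMv]; exact WithBot.bot_lt_coe _
        · by_cases hkF : t k = M
          · have hkFmem : k ∈ F := Finset.mem_filter.mpr ⟨Finset.mem_univ k, hkF⟩
            have hlt2 : pivP k < j := lt_of_le_of_lt (hk0max k hkFmem) hgt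
            have h2 : degZ (P k j) + (s j : WithBot ℤ) ≠ sdeg s (P k) := (hpivP k).2 j hlt2
            have h1 : degZ (P k j) + (s j : WithBot ℤ) ≤ sdeg s (P k) :=
              Finset.le_sup (f := fun c => degZ (P k c) + (s c : WithBot ℤ)) (Finset.mem_univ j)
            have h3 : degZ (P k j) + (s j : WithBot ℤ) < sdeg s (P k) := lt_of_le_of_ne h1 h2
            have huk : degZ (u k) ≠ ⊥ := fun h => hu (degZ_eq_bot.mp h)
            obtain ⟨uv, huv⟩ := WithBot.ne_bot_iff_exists.mp huk
            have h4 : degZ (u k) + (degZ (P k j) + (s j : WithBot ℤ)) < degZ (u k) + sdeg s (P k) := by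
              rw [← huv]; exact WithBot.add_lt_add_left (WithBot.coe_ne_bot) h3
            rw [← add_assoc] at h4
            calc degZ (u k * P k j) + (s j : WithBot ℤ)
                = degZ (u k) + degZ (P k j) + (s j : WithBot ℤ) := by rw [degZ_mul]
              _ < degZ (u k) + sdeg s (P k) := h4
              _ = t k := rfl
              _ = M := hkF
          · exact lt_of_le_of_lt (hterm k j) (lt_of_le_of_ne (htM k) hkF)
      exact absurd hjM (ne_of_lt hstrict)
  -- conclusion
  refine ⟨k0, hC.symm, ?_⟩
  rw [hC, hB, hD0def]
  refine wb_le_add _ _ ?_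
  obtain ⟨uv, huv⟩ := WithBot.ne_bot_iff_exists.mp hu0
  have hu0' : u k0 ≠ 0 := fun h => hu0 (by rw [h, degZ_zero])
  have : (0 : WithBot ℕ) ≤ (u k0).degree := Polynomial.zero_le_degree_iff.mpr hu0'
  unfold degZ
  cases hd : (u k0).degree with
  | bot => exact absurd (Polynomial.degree_eq_bot.mp hd) hu0'
  | coe n => rw [WithBot.map_coe]; exact_mod_cast Int.ofNat_nonneg n

/-- two left-unimodularly equivalent nonsingular matrices in `s`-weak
Popov form have the same `s`-pivot degree. -/
theorem weak_popov_equiv_same_pivot_degree {K : Type*} [Field K] {m : ℕ} (hm : 1 ≤ m)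
    (s : Fin m → ℤ) (P Q U : Matrix (Fin m) (Fin m) (Polynomial K))
    (hPdet : P.det ≠ 0) (hQdet : Q.det ≠ 0)
    (pivP pivQ : Fin m → Fin m)
    (hpivP : ∀ i, IsPivotIndex s (P i) (pivP i)) (hPinj : Function.Injective pivP)
    (hpivQ : ∀ i, IsPivotIndex s (Q i) (pivQ i)) (hQinj : Function.Injective pivQ)
    (hU : ∃ c : K, c ≠ 0 ∧ U.det = Polynomial.C c) (hQU : Q = U * P) :
    ∀ i i', pivP i = pivQ i' →
      (P i (pivP i)).natDegree = (Q i' (pivQ i')).natDegree := by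
  classical
  intro i i' hpiv
  obtain ⟨c, hc, hdet⟩ := hU
  have hUdet : IsUnit U.det := by rw [hdet]; exact Polynomial.isUnit_C.mpr hc.isUnit
  have hVU : U⁻¹ * U = 1 := Matrix.nonsing_inv_mul U hUdet
  have hPU : P = U⁻¹ * Q := by rw [hQU, ← Matrix.mul_assoc, hVU, Matrix.one_mul]
  have hrow : ∀ (R : Matrix (Fin m) (Fin m) (Polynomial K)), R.det ≠ 0 →
      ∀ r : Fin m, sdeg s (R r) ≠ ⊥ := by
    intro R hR r hb
    have hex : ∃ cc, R r cc ≠ 0 := by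
      by_contra h
      push_neg at h
      exact hR (Matrix.det_eq_zero_of_row_eq_zero r h)
    obtain ⟨cc, hcc⟩ := hex
    have hle : degZ (R r cc) + (s cc : WithBot ℤ) ≤ sdeg s (R r) :=
      Finset.le_sup (f := fun jj => degZ (R r jj) + (s jj : WithBot ℤ)) (Finset.mem_univ cc)
    rw [hb] at hle
    rcases WithBot.add_eq_bot.mp (le_bot_iff.mp hle) with h | h
    · exact hcc (degZ_eq_bot.mp h)
    · exact WithBot.coe_ne_bot h
  obtain ⟨k, hk, hle1⟩ := key_lemma s P pivP hpivP hPinj (U i') (Q i')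
    (fun cc => by rw [hQU]; exact Matrix.mul_apply) (pivQ i') (hpivQ i') (hrow Q hQdet i')
  obtain ⟨k', hk', hle2⟩ := key_lemma s Q pivQ hpivQ hQinj ((U⁻¹) i) (P i)
    (fun cc => by rw [hPU]; exact Matrix.mul_apply) (pivP i) (hpivP i) (hrow P hPdet i)
  have hki : k = i := hPinj (by rw [hk, ← hpiv])
  have hk'i : k' = i' := hQinj (by rw [hk', hpiv])
  rw [hki] at hle1
  rw [hk'i] at hle2
  rw [hpiv] at hle2
  rw [hpiv]
  have he : degZ (P i (pivQ i')) = degZ (Q i' (pivQ i')) := le_antisymm hle1 hle2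
  have hd : (P i (pivQ i')).degree = (Q i' (pivQ i')).degree :=
    le_antisymm (degZ_le_iff.mp he.le) (degZ_le_iff.mp he.ge)
  exact Polynomial.natDegree_eq_of_degree_eq hd
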